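/- Let X be a random variable with distribution Beta(1+S, 1+n−S), mean m, and let v > m. Then E[(X − v)⁺] ≤ 1/(4(n+3)(v − m)). -/

import Mathlib

open MeasureTheory

/-- The Beta(a, b) distribution on [0,1], defined by its density
`x^(a-1) (1-x)^(b-1) / B(a,b)` with `B(a,b) = Γ(a)Γ(b)/Γ(a+b)`. -/
noncomputable def betaMeasure (a b : ℝ) : Measure ℝ :=
  (volume.restrict (Set.Icc (0 : ℝ) 1)).withDensity
    (fun x => ENNReal.ofReal
      (x ^ (a - 1) * (1 - x) ^ (b - 1) / (Real.Gamma a * Real.Gamma b / Real.Gamma (a + b))))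

open intervalIntegral
lemma ibeta (a b : ℕ) :
    ∫ x in (0:ℝ)..1, x ^ a * (1 - x) ^ b
      = Real.Gamma (a+1) * Real.Gamma (b+1) / Real.Gamma ((a:ℝ)+(b:ℝ)+2) := by
  have h := Complex.Gamma_mul_Gamma_eq_betaIntegral (s := (a:ℂ)+1) (t := (b:ℂ)+1)
    (by simp; positivity) (by simp; positivity)
  have hb : Complex.betaIntegral ((a:ℂ)+1) ((b:ℂ)+1)
      = ((∫ x in (0:ℝ)..1, x ^ a * (1 - x) ^ b : ℝ) : ℂ) := by
    rw [Complex.betaIntegral, ← intervalIntegral.integral_ofReal]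
    refine intervalIntegral.integral_congr fun x _ => ?_
    push_cast
    rw [add_sub_cancel_right, add_sub_cancel_right, Complex.cpow_natCast, Complex.cpow_natCast]
  rw [hb] at h
  have hca : ((a:ℂ)+1) = (((a:ℝ)+1 : ℝ) : ℂ) := by push_cast; ring
  have hcb : ((b:ℂ)+1) = (((b:ℝ)+1 : ℝ) : ℂ) := by push_cast; ring
  rw [hca, hcb] at h
  rw [show ((((a:ℝ)+1 : ℝ) : ℂ) + (((b:ℝ)+1 : ℝ) : ℂ)) = (((a:ℝ)+(b:ℝ)+2 : ℝ) : ℂ) by push_cast; ring] at h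
  rw [Complex.Gamma_ofReal, Complex.Gamma_ofReal, Complex.Gamma_ofReal] at h
  have hpos : 0 < Real.Gamma ((a:ℝ)+(b:ℝ)+2) := Real.Gamma_pos_of_pos (by positivity)
  have := congrArg Complex.re h
  simp [← Complex.ofReal_mul] at this
  field_simp
  linarith [this]

lemma betaMeasure_integral_eq (a b : ℕ) (f : ℝ → ℝ) :
    ∫ x, f x ∂(betaMeasure ((a:ℝ)+1) ((b:ℝ)+1))
      = ∫ x in (0:ℝ)..1, f x * (x^a*(1-x)^b /
          (Real.Gamma ((a:ℝ)+1) * Real.Gamma ((b:ℝ)+1) / Real.Gamma ((a:ℝ)+1+((b:ℝ)+1)))) := by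
  set C : ℝ := Real.Gamma ((a:ℝ)+1) * Real.Gamma ((b:ℝ)+1) / Real.Gamma ((a:ℝ)+1+((b:ℝ)+1)) with hC
  have hCpos : 0 < C := by
    apply div_pos (mul_pos (Real.Gamma_pos_of_pos (by positivity)) (Real.Gamma_pos_of_pos (by positivity)))
      (Real.Gamma_pos_of_pos (by positivity))
  set d : ℝ → ℝ := fun x => x^a*(1-x)^b / C with hd
  have hmeq : betaMeasure ((a:ℝ)+1) ((b:ℝ)+1)
      = (volume.restrict (Set.Icc (0:ℝ) 1)).withDensity (fun x => ((d x).toNNReal : ENNReal)) := by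
    unfold betaMeasure
    congr 1
    funext x
    rw [ENNReal.ofReal]
    congr 1
    simp only [hd, add_sub_cancel_right, Real.rpow_natCast]
    rfl
  rw [hmeq, integral_withDensity_eq_integral_smul (by fun_prop) f]
  rw [integral_of_le zero_le_one, ← integral_Icc_eq_integral_Ioc]
  refine setIntegral_congr_fun measurableSet_Icc fun x hx => ?_
  have hdnn : 0 ≤ d x :=
    div_nonneg (mul_nonneg (pow_nonneg hx.1 _) (pow_nonneg (by linarith [hx.2]) _)) hCpos.le
  simp [NNReal.smul_def, Real.coe_toNNReal _ hdnn, mul_comm]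
  exact Or.inl rfl

set_option maxHeartbeats 1000000 in
/-- EI bound for a Beta posterior: if `X ~ Beta(1+S, 1+n−S)` with mean `m = (1+S)/(n+2)`
and `v > m`, then `E[(X − v)⁺] ≤ 1/(4(n+3)(v − m))`. -/
theorem beta_ei_bound (n S : ℕ) (hS : S ≤ n) (m v : ℝ)
    (hm : m = (1 + (S : ℝ)) / ((n : ℝ) + 2)) (hv : m < v) :
    ∫ x, max (x - v) 0 ∂(betaMeasure (1 + S) (1 + (n : ℝ) - S))
      ≤ 1 / (4 * ((n : ℝ) + 3) * (v - m)) := by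
  set a : ℕ := S with ha
  set b : ℕ := n - S with hb
  have hbn : (b:ℝ) = (n:ℝ) - (S:ℝ) := by
    rw [hb, Nat.cast_sub hS]
  have hab : (a:ℝ) + (b:ℝ) = (n:ℝ) := by rw [hbn]; ring
  have hmeas : betaMeasure (1 + S) (1 + (n:ℝ) - S) = betaMeasure ((a:ℝ)+1) ((b:ℝ)+1) := by
    rw [hbn]; ring_nf
    rfl
  set x : ℝ := (a:ℝ) with hx
  set y : ℝ := (b:ℝ) with hy
  have hs : 0 < v - m := by linarith
  set C : ℝ := Real.Gamma (x+1) * Real.Gamma (y+1) / Real.Gamma (x+1+(y+1)) with hC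
  have hA : 0 < Real.Gamma (x+1) := Real.Gamma_pos_of_pos (by positivity)
  have hB : 0 < Real.Gamma (y+1) := Real.Gamma_pos_of_pos (by positivity)
  have hG : 0 < Real.Gamma (x+1+(y+1)) := Real.Gamma_pos_of_pos (by positivity)
  have hCpos : 0 < C := div_pos (mul_pos hA hB) hG
  rw [hmeas, betaMeasure_integral_eq a b _]
  -- comparison step
  have step1 : ∫ t in (0:ℝ)..1, (max (t - v) 0) * (t^a*(1-t)^b / C)
      ≤ ∫ t in (0:ℝ)..1, ((t-m)^2/(v-m)) * (t^a*(1-t)^b / C) := by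
    apply intervalIntegral.integral_mono_on zero_le_one
    · exact (Continuous.intervalIntegrable (by continuity) _ _)
    · exact (Continuous.intervalIntegrable (by continuity) _ _)
    · intro t ht
      have hdnn : 0 ≤ t^a*(1-t)^b / C :=
        div_nonneg (mul_nonneg (pow_nonneg ht.1 _) (pow_nonneg (by linarith [ht.2]) _)) hCpos.le
      apply mul_le_mul_of_nonneg_right _ hdnn
      apply max_le
      · rw [le_div_iff₀ hs]; nlinarith [sq_nonneg (t - v), sq_nonneg (v - m)]
      · positivity
  refine le_trans step1 ?_
  -- compute the second moment integral
  have hint : ∀ k : ℕ, IntervalIntegrable (fun t : ℝ => t^k*(1-t)^b) volume 0 1 :=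
    fun k => (Continuous.intervalIntegrable (by continuity) _ _)
  have expand : (fun t : ℝ => ((t-m)^2/(v-m)) * (t^a*(1-t)^b / C))
      = fun t : ℝ => (1/((v-m)*C)) * (t^(a+2)*(1-t)^b - 2*m*(t^(a+1)*(1-t)^b) + m^2*(t^a*(1-t)^b)) := by
    funext t; field_simp; ring
  rw [expand, intervalIntegral.integral_const_mul, intervalIntegral.integral_add
    (((hint (a+2)).sub ((hint (a+1)).const_mul _))) ((hint a).const_mul _),
    intervalIntegral.integral_sub (hint (a+2)) ((hint (a+1)).const_mul _),
    intervalIntegral.integral_const_mul, intervalIntegral.integral_const_mul]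
  rw [ibeta a b, ibeta (a+1) b, ibeta (a+2) b]
  push_cast
  -- Gamma recurrences
  have g1 : Real.Gamma (x+1+1) = (x+1) * Real.Gamma (x+1) := by
    rw [Real.Gamma_add_one (by positivity)]
  have g2 : Real.Gamma (x+2+1) = (x+2) * ((x+1) * Real.Gamma (x+1)) := by
    rw [show x+2+1 = (x+1+1)+1 by ring, Real.Gamma_add_one (by positivity), g1]; ring_nf
  have g3 : Real.Gamma (x+1+y+2) = (x+y+2) * Real.Gamma (x+y+2) := by
    rw [show x+1+y+2 = (x+y+2)+1 by ring, Real.Gamma_add_one (by positivity)]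
  have g4 : Real.Gamma (x+2+y+2) = (x+y+3) * ((x+y+2) * Real.Gamma (x+y+2)) := by
    rw [show x+2+y+2 = (x+y+3)+1 by ring, show x+y+3 = (x+y+2)+1 by ring,
      Real.Gamma_add_one (by positivity), Real.Gamma_add_one (by positivity)]
  have hG2 : 0 < Real.Gamma (x+y+2) := Real.Gamma_pos_of_pos (by positivity)
  have hCeq : C = Real.Gamma (x+1) * Real.Gamma (y+1) / Real.Gamma (x+y+2) := by
    rw [hC, show x+1+(y+1) = x+y+2 by ring]
  simp only [← hx, ← hy]
  rw [g1, g2, g3, g4, hm, ← hab]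
  set A := Real.Gamma (x+1)
  set B := Real.Gamma (y+1)
  set G := Real.Gamma (x+y+2)
  have hxy2 : (0:ℝ) < x + y + 2 := by positivity
  have hxy3 : (0:ℝ) < x + y + 3 := by positivity
  have hm' : m = (1+x)/(x+y+2) := by rw [hm, hab]
  have hvm : 0 < v - (1+x)/(x+y+2) := by rw [← hm']; exact hs
  have key : 4*(x+1)*(y+1) ≤ (x+y+2)^2 := by nlinarith [sq_nonneg (x-y)]
  have heq : ∀ w : ℝ, w ≠ 0 → 1 / (w * C) *
      ((x + 2) * ((x + 1) * A) * B / ((x + y + 3) * ((x + y + 2) * G)) -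
          2 * ((1 + x) / (x + y + 2)) * ((x + 1) * A * B / ((x + y + 2) * G)) +
        ((1 + x) / (x + y + 2)) ^ 2 * (A * B / G))
      = (x+1)*(y+1) / ((x+y+2)^2*(x+y+3)*w) := by
    intro w hw
    rw [hCeq]
    field_simp
    ring
  rw [heq _ hvm.ne', div_le_div_iff₀ (by positivity) (by positivity)]
  nlinarith [mul_le_mul_of_nonneg_right key (mul_pos hxy3 hvm).le]
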